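/- Let f : ℝ → ℝ be monotone increasing and A ≤ B self-adjoint operators on a finite-dimensional complex inner product space. Then tr f(A) ≤ tr f(B), where f(A) is defined by the functional calculus (applying f to eigenvalues). -/

import Mathlib

open scoped ComplexOrder

section TraceMonotoneAux
open Matrix

variable {n : Type*} [Fintype n] [DecidableEq n] {A : Matrix n n ℂ}

lemma key_conj (U : Matrix n n ℂ) (c : n → ℂ) (M : Matrix n n ℂ) :
    star (U *ᵥ c) ⬝ᵥ (M *ᵥ (U *ᵥ c)) = star c ⬝ᵥ ((star U * M * U) *ᵥ c) := by
  rw [star_mulVec, mulVec_mulVec, dotProduct_mulVec, vecMul_vecMul, dotProduct_mulVec,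
    ← mul_assoc]
  rfl

lemma quad_eq (hA : A.IsHermitian) (c : n → ℂ) :
    star ((hA.eigenvectorUnitary : Matrix n n ℂ) *ᵥ c) ⬝ᵥ
      (A *ᵥ ((hA.eigenvectorUnitary : Matrix n n ℂ) *ᵥ c))
      = ((∑ i, hA.eigenvalues i * ‖c i‖ ^ 2 : ℝ) : ℂ) := by
  have hdiag : star (hA.eigenvectorUnitary : Matrix n n ℂ) * A * (hA.eigenvectorUnitary : Matrix n n ℂ)
      = diagonal (RCLike.ofReal ∘ hA.eigenvalues) := by
    rw [← hA.conjStarAlgAut_star_eigenvectorUnitary, Unitary.conjStarAlgAut_star_apply]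
  rw [key_conj, hdiag]
  push_cast
  simp only [dotProduct, mulVec_diagonal, Function.comp_apply, Pi.star_apply,
    Complex.star_def]
  congr 1; ext i
  rw [show ((RCLike.ofReal (hA.eigenvalues i) : ℂ)) = Complex.ofReal (hA.eigenvalues i) from rfl,
    mul_left_comm, Complex.conj_mul']

lemma norm_eq (hA : A.IsHermitian) (c : n → ℂ) :
    star ((hA.eigenvectorUnitary : Matrix n n ℂ) *ᵥ c) ⬝ᵥ ((hA.eigenvectorUnitary : Matrix n n ℂ) *ᵥ c)
      = ((∑ i, ‖c i‖ ^ 2 : ℝ) : ℂ) := by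
  have := key_conj (hA.eigenvectorUnitary : Matrix n n ℂ) c 1
  rw [one_mulVec] at this
  rw [this, mul_one, Unitary.coe_star_mul_self, one_mulVec]
  push_cast
  simp only [dotProduct, Pi.star_apply]
  congr 1; ext i
  simp only [Complex.star_def]
  rw [Complex.conj_mul']

lemma starDot (x : n → ℂ) : star x ⬝ᵥ x = ((∑ j, ‖x j‖ ^ 2 : ℝ) : ℂ) := by
  push_cast
  simp only [dotProduct, Pi.star_apply, Complex.star_def]
  congr 1; ext i
  rw [Complex.conj_mul']

lemma col_linearIndependent (hA : A.IsHermitian) :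
    LinearIndependent ℂ (fun j => (fun i => (hA.eigenvectorUnitary : Matrix n n ℂ) i j : n → ℂ)) := by
  have h := hA.eigenvectorBasis.toBasis.linearIndependent
  rw [hA.eigenvectorBasis.coe_toBasis] at h
  exact h.map' (WithLp.linearEquiv 2 ℂ (n → ℂ)).toLinearMap (LinearEquiv.ker _)

lemma mulVec_eq_sum_col (U : Matrix n n ℂ) (c : n → ℂ) :
    U *ᵥ c = ∑ j : n, c j • (fun i => U i j) := by
  funext i
  simp only [mulVec, dotProduct, Finset.sum_apply, Pi.smul_apply, smul_eq_mul, mul_comm]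

lemma rep_of_mem_span {U : Matrix n n ℂ} {p : n → Prop} [DecidablePred p] {x : n → ℂ}
    (hx : x ∈ Submodule.span ℂ (Set.range fun i : {i // p i} => (fun k => U k i : n → ℂ))) :
    ∃ c : n → ℂ, (∀ i, ¬ p i → c i = 0) ∧ x = U *ᵥ c := by
  rw [Submodule.mem_span_range_iff_exists_fun] at hx
  obtain ⟨d, hd⟩ := hx
  refine ⟨fun j => if h : p j then d ⟨j, h⟩ else 0, fun i hi => dif_neg hi, ?_⟩
  rw [mulVec_eq_sum_col, ← Fintype.sum_subtype_add_sum_subtype p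
    (fun j => (if h : p j then d ⟨j, h⟩ else 0) • (fun i => U i j : n → ℂ))]
  have h2 : ∑ i : {x // ¬ p x}, (if h : p (i : n) then d ⟨i, h⟩ else 0) • (fun k => U k (i : n) : n → ℂ) = 0 := by
    apply Finset.sum_eq_zero
    intro i _
    rw [dif_neg i.2, zero_smul]
  rw [h2, add_zero, ← hd]
  apply Finset.sum_congr rfl
  intro i _
  rw [dif_pos i.2]

lemma quad_lower {lam : n → ℝ} {t : ℝ} {c : n → ℂ}
    (hc : ∀ i, ¬ t < lam i → c i = 0) (hc0 : c ≠ 0) :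
    t * ∑ i, ‖c i‖ ^ 2 < ∑ i, lam i * ‖c i‖ ^ 2 := by
  rw [Finset.mul_sum]
  obtain ⟨i₀, hi₀⟩ := Function.ne_iff.mp hc0
  apply Finset.sum_lt_sum
  · intro i _
    by_cases h : t < lam i
    · exact mul_le_mul_of_nonneg_right h.le (sq_nonneg _)
    · rw [hc i h]; simp
  · refine ⟨i₀, Finset.mem_univ _, ?_⟩
    have hp : t < lam i₀ := by
      by_contra h
      exact hi₀ (hc i₀ h)
    have : (0:ℝ) < ‖c i₀‖ ^ 2 := pow_pos (norm_pos_iff.mpr hi₀) 2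
    exact mul_lt_mul_of_pos_right hp this

lemma quad_upper {lam : n → ℝ} {t : ℝ} {d : n → ℂ}
    (hd : ∀ i, t < lam i → d i = 0) :
    ∑ i, lam i * ‖d i‖ ^ 2 ≤ t * ∑ i, ‖d i‖ ^ 2 := by
  rw [Finset.mul_sum]
  apply Finset.sum_le_sum
  intro i _
  by_cases h : t < lam i
  · rw [hd i h]; simp
  · exact mul_le_mul_of_nonneg_right (not_lt.mp h) (sq_nonneg _)

lemma loewner_re {B : Matrix n n ℂ} (hAB : (B - A).PosSemidef) (x : n → ℂ) :
    (star x ⬝ᵥ (A *ᵥ x)).re ≤ (star x ⬝ᵥ (B *ᵥ x)).re := by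
  have h := hAB.re_dotProduct_nonneg x
  rw [sub_mulVec, dotProduct_sub] at h
  simp only [RCLike.re_to_complex, Complex.sub_re] at h
  linarith

lemma count_le {B : Matrix n n ℂ} (hA : A.IsHermitian) (hB : B.IsHermitian)
    (hAB : (B - A).PosSemidef) (t : ℝ) :
    Nat.card {i // t < hA.eigenvalues i} ≤ Nat.card {i // t < hB.eigenvalues i} := by
  classical
  set UA := (hA.eigenvectorUnitary : Matrix n n ℂ) with hUA
  set UB := (hB.eigenvectorUnitary : Matrix n n ℂ) with hUB
  set V : Submodule ℂ (n → ℂ) :=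
    Submodule.span ℂ (Set.range fun i : {i // t < hA.eigenvalues i} => (fun k => UA k i : n → ℂ))
  set W : Submodule ℂ (n → ℂ) :=
    Submodule.span ℂ (Set.range fun i : {i // ¬ t < hB.eigenvalues i} => (fun k => UB k i : n → ℂ))
  have hVdim : Module.finrank ℂ V = Nat.card {i // t < hA.eigenvalues i} := by
    rw [Nat.card_eq_fintype_card]
    exact finrank_span_eq_card ((col_linearIndependent hA).comp _ Subtype.val_injective)
  have hWdim : Module.finrank ℂ W = Nat.card {i // ¬ t < hB.eigenvalues i} := by
    rw [Nat.card_eq_fintype_card]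
    exact finrank_span_eq_card ((col_linearIndependent hB).comp _ Subtype.val_injective)
  have hdisj : V ⊓ W = ⊥ := by
    rw [Submodule.eq_bot_iff]
    intro x hx
    by_contra hx0
    obtain ⟨c, hc, hxc⟩ := rep_of_mem_span hx.1
    obtain ⟨d, hd, hxd⟩ := rep_of_mem_span hx.2
    have hcnorm : ∑ i, ‖c i‖ ^ 2 = ∑ j, ‖x j‖ ^ 2 := by
      have := (norm_eq hA c).symm.trans (by rw [← hxc, starDot] : star (UA *ᵥ c) ⬝ᵥ (UA *ᵥ c) = ((∑ j, ‖x j‖ ^ 2 : ℝ) : ℂ))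
      exact_mod_cast this
    have hdnorm : ∑ i, ‖d i‖ ^ 2 = ∑ j, ‖x j‖ ^ 2 := by
      have := (norm_eq hB d).symm.trans (by rw [← hxd, starDot] : star (UB *ᵥ d) ⬝ᵥ (UB *ᵥ d) = ((∑ j, ‖x j‖ ^ 2 : ℝ) : ℂ))
      exact_mod_cast this
    have hc0 : c ≠ 0 := by
      rintro rfl
      rw [mulVec_zero] at hxc
      exact hx0 hxc
    have h1 : t * ∑ j, ‖x j‖ ^ 2 < ∑ i, hA.eigenvalues i * ‖c i‖ ^ 2 := by
      rw [← hcnorm]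
      exact quad_lower hc hc0
    have h2 : ∑ i, hA.eigenvalues i * ‖c i‖ ^ 2 = (star x ⬝ᵥ (A *ᵥ x)).re := by
      rw [hxc, quad_eq hA c, Complex.ofReal_re]
    have h3 : (star x ⬝ᵥ (B *ᵥ x)).re = ∑ i, hB.eigenvalues i * ‖d i‖ ^ 2 := by
      rw [hxd, quad_eq hB d, Complex.ofReal_re]
    have h4 : ∑ i, hB.eigenvalues i * ‖d i‖ ^ 2 ≤ t * ∑ j, ‖x j‖ ^ 2 := by
      rw [← hdnorm]
      exact quad_upper (fun i hi => hd i (not_not_intro hi))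
    have := loewner_re hAB x
    linarith
  have hsum := Submodule.finrank_sup_add_finrank_inf_eq V W
  rw [hdisj, finrank_bot, add_zero] at hsum
  have hle : Module.finrank ℂ (V ⊔ W : Submodule ℂ (n → ℂ)) ≤ Fintype.card n := by
    have := Submodule.finrank_le (V ⊔ W : Submodule ℂ (n → ℂ))
    rwa [Module.finrank_fintype_fun_eq_card] at this
  have hcompl : Nat.card {i // t < hB.eigenvalues i} + Nat.card {i // ¬ t < hB.eigenvalues i}
      = Fintype.card n := by
    simp only [Nat.card_eq_fintype_card]
    rw [Fintype.card_subtype_compl]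
    have := Fintype.card_subtype_le (fun i => t < hB.eigenvalues i)
    omega
  omega

lemma sorted_pointwise {m : ℕ} {μ ν : Fin m → ℝ} (hμ : Monotone μ) (hν : Monotone ν)
    (h : ∀ t, Nat.card {k // t < μ k} ≤ Nat.card {k // t < ν k}) : μ ≤ ν := by
  intro k
  by_contra hk
  push_neg at hk
  classical
  set t := ν k with ht
  have h1 : Nat.card {j // k ≤ j} ≤ Nat.card {j // t < μ j} := by
    simp only [Nat.card_eq_fintype_card]
    exact Fintype.card_subtype_mono _ _ (fun j hj => lt_of_lt_of_le hk (hμ hj))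
  have h2 : Nat.card {j // t < ν j} ≤ Nat.card {j // k < j} := by
    simp only [Nat.card_eq_fintype_card]
    refine Fintype.card_subtype_mono _ _ (fun j hj => ?_)
    by_contra hjk
    push_neg at hjk
    exact absurd (hν hjk) (not_le.mpr hj)
  have c1 : Nat.card {j : Fin m // k ≤ j} = m - k := by
    rw [Nat.card_eq_fintype_card, Fintype.card_subtype, Finset.filter_le_eq_Ici, Fin.card_Ici]
  have c2 : Nat.card {j : Fin m // k < j} = m - 1 - k := by
    rw [Nat.card_eq_fintype_card, Fintype.card_subtype, Finset.filter_lt_eq_Ioi, Fin.card_Ioi]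
  have hkm : (k : ℕ) < m := k.2
  have := h t
  omega

theorem stmt_9_aux {n : Type*} [Fintype n] [DecidableEq n] (f : ℝ → ℝ) (hf : Monotone f)
    (A B : Matrix n n ℂ) (hA : A.IsHermitian) (hB : B.IsHermitian)
    (hAB : (B - A).PosSemidef) :
    ∑ i, f (hA.eigenvalues i) ≤ ∑ i, f (hB.eigenvalues i) := by
  classical
  set e : Fin (Fintype.card n) ≃ n := (Fintype.equivFin n).symm with he
  set g := fun k => hA.eigenvalues (e k) with hg
  set h := fun k => hB.eigenvalues (e k) with hh
  set σ := Tuple.sort g with hσ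
  set τ := Tuple.sort h with hτ
  have hμ : Monotone (g ∘ σ) := Tuple.monotone_sort g
  have hν : Monotone (h ∘ τ) := Tuple.monotone_sort h
  have hcount : ∀ t, Nat.card {k // t < (g ∘ σ) k} ≤ Nat.card {k // t < (h ∘ τ) k} := by
    intro t
    have e1 : Nat.card {k // t < (g ∘ σ) k} = Nat.card {i // t < hA.eigenvalues i} :=
      Nat.card_congr (Equiv.subtypeEquiv (σ.trans e) (fun k => Iff.rfl))
    have e2 : Nat.card {k // t < (h ∘ τ) k} = Nat.card {i // t < hB.eigenvalues i} :=
      Nat.card_congr (Equiv.subtypeEquiv (τ.trans e) (fun k => Iff.rfl))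
    rw [e1, e2]
    exact count_le hA hB hAB t
  have hpt := sorted_pointwise hμ hν hcount
  have eqA : ∑ i, f (hA.eigenvalues i) = ∑ k, f ((g ∘ σ) k) := by
    rw [← Equiv.sum_comp e (fun i => f (hA.eigenvalues i)), ← Equiv.sum_comp σ (fun k => f (g k))]
    rfl
  have eqB : ∑ i, f (hB.eigenvalues i) = ∑ k, f ((h ∘ τ) k) := by
    rw [← Equiv.sum_comp e (fun i => f (hB.eigenvalues i)), ← Equiv.sum_comp τ (fun k => f (h k))]
    rfl
  rw [eqA, eqB]
  exact Finset.sum_le_sum fun k _ => hf (hpt k)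

end TraceMonotoneAux

/-- For `f : ℝ → ℝ` monotone increasing and Hermitian matrices `A ≤ B`,
`tr f(A) ≤ tr f(B)`, where `f(A)` applies `f` to the eigenvalues, so that
`tr f(A) = ∑ᵢ f(λᵢ(A))`. -/
theorem stmt_9 {n : Type*} [Fintype n] [DecidableEq n] (f : ℝ → ℝ) (hf : Monotone f)
    (A B : Matrix n n ℂ) (hA : A.IsHermitian) (hB : B.IsHermitian)
    (hAB : (B - A).PosSemidef) :
    ∑ i, f (hA.eigenvalues i) ≤ ∑ i, f (hB.eigenvalues i) :=
  stmt_9_aux f hf A B hA hB hAB
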